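/- For any simplicial set X, restriction along the inclusion i₂ : X^{(2)} → X of the 2-skeleton induces a bijection from simplicial set maps X → D_R(S¹) to simplicial set maps X^{(2)} → D_R(S¹). -/

import Mathlib

open CategoryTheory Simplicial Opposite

def DistR (R : Type) [CommSemiring R] (U : Type*) : Type _ :=
  {p : U →₀ R // p.sum (fun _ r => r) = 1}

noncomputable def DistR.map {R : Type} [CommSemiring R] {U V : Type*}
    (f : U → V) (p : DistR R U) : DistR R V :=
  ⟨Finsupp.mapDomain f p.1,
    (Finsupp.sum_mapDomain_index (fun _ => rfl) (fun _ _ _ => rfl)).trans p.2⟩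

theorem DistR.map_id {R : Type} [CommSemiring R] {U : Type*} (p : DistR R U) :
    DistR.map id p = p := by
  apply Subtype.ext; exact Finsupp.mapDomain_id

theorem DistR.map_comp {R : Type} [CommSemiring R] {U V W : Type*} (f : U → V) (g : V → W)
    (p : DistR R U) : DistR.map (g ∘ f) p = DistR.map g (DistR.map f p) := by
  apply Subtype.ext; exact Finsupp.mapDomain_comp

/-- The simplicial set of `R`-distributions on a simplicial set `Y`. -/
noncomputable def DRobj (R : Type) [CommSemiring R] (Y : SSet.{0}) : SSet.{0} where
  obj n := DistR R (Y.obj n)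
  map θ := TypeCat.ofHom fun p => DistR.map (Y.map θ) p
  map_id n := by
    ext p
    simp only [CategoryTheory.Functor.map_id]
    exact DistR.map_id p
  map_comp θ θ' := by
    ext p
    have : DistR.map ((_root_.id Y).map (θ ≫ θ')) p
        = DistR.map (Y.map θ' ∘ Y.map θ) p := by
      congr 1
      ext x
      simp
    simpa using this.trans (DistR.map_comp _ _ p)

/-- The unit `δ : Y → D_R(Y)`. -/
noncomputable def deltaNat (R : Type) [CommSemiring R] (Y : SSet.{0}) :
    Y ⟶ DRobj R Y where
  app n := TypeCat.ofHom fun y => ⟨Finsupp.single y 1, by rw [Finsupp.sum_single_index rfl]⟩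
  naturality n m θ := by
    ext y
    refine Subtype.ext ?_
    show Finsupp.single (Y.map θ y) 1 = Finsupp.mapDomain (Y.map θ) (Finsupp.single y 1)
    exact Finsupp.mapDomain_single.symm

/-- A map in the simplex category is constant. -/
def IsConstHom {k m : SimplexCategory} (f : k ⟶ m) : Prop :=
  ∀ i j, f.toOrderHom i = f.toOrderHom j

/-- The simplicial circle `S¹ = Δ[1]/∂Δ[1]`: the quotient of the standard 1-simplex
(whose `n`-simplices are the maps `[n] → [1]` in the simplex category) identifying
all constant maps to the single base point. -/
def SCircle : SSet.{0} where
  obj n := Quot (fun f g : (n.unop ⟶ SimplexCategory.mk 1) => IsConstHom f ∧ IsConstHom g)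
  map {n m} θ := TypeCat.ofHom <| Quot.map (fun f => θ.unop ≫ f)
    (by
      rintro f g ⟨hf, hg⟩
      refine ⟨fun i j => ?_, fun i j => ?_⟩
      · show (SimplexCategory.Hom.toOrderHom (θ.unop ≫ f)) i
          = (SimplexCategory.Hom.toOrderHom (θ.unop ≫ f)) j
        rw [SimplexCategory.comp_toOrderHom]
        exact hf _ _
      · show (SimplexCategory.Hom.toOrderHom (θ.unop ≫ g)) i
          = (SimplexCategory.Hom.toOrderHom (θ.unop ≫ g)) j
        rw [SimplexCategory.comp_toOrderHom]
        exact hg _ _)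
  map_id n := by
    ext q
    induction q using Quot.ind with
    | _ f =>
      show Quot.mk _ _ = Quot.mk _ _
      congr 1
      simp
  map_comp θ θ' := by
    ext q
    induction q using Quot.ind with
    | _ f =>
      show Quot.mk _ _ = Quot.mk _ _
      congr 1
      try simp

section Dev
open SimplexCategory

lemma v0 : ((0 : Fin ((SimplexCategory.mk 1).len + 1)) : ℕ) = 0 := rfl
lemma v1 : ((1 : Fin ((SimplexCategory.mk 1).len + 1)) : ℕ) = 1 := rfl

lemma fin2_val (v : Fin ((SimplexCategory.mk 1).len + 1)) : (v:ℕ) = 0 ∨ (v:ℕ) = 1 := by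
  rcases v with ⟨v, hv⟩
  rw [SimplexCategory.len_mk] at hv
  simp only [Fin.val_mk]
  omega

lemma fin2_ext {v w : Fin ((SimplexCategory.mk 1).len + 1)} (h : (v:ℕ) = (w:ℕ)) : v = w :=
  Fin.ext h

/-- threshold map `[m] ⟶ [1]`, value 1 iff `i < k`. -/
def thrm {m : SimplexCategory} (i : Fin m.len) : m ⟶ SimplexCategory.mk 1 :=
  SimplexCategory.Hom.mk ⟨fun k => if (i : ℕ) < (k : ℕ) then 1 else 0, by
    intro k k' h
    dsimp
    by_cases hk : (i : ℕ) < (k : ℕ)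
    · rw [if_pos hk, if_pos (lt_of_lt_of_le hk h)]
    · rw [if_neg hk]
      split <;> simp⟩

def cstm {m : SimplexCategory} : m ⟶ SimplexCategory.mk 1 :=
  SimplexCategory.Hom.mk ⟨fun _ => 0, monotone_const⟩

lemma cstm_const {m : SimplexCategory} : IsConstHom (cstm (m := m)) := fun _ _ => rfl

lemma thrm_apply {m : SimplexCategory} (i : Fin m.len) (k) :
    (thrm i).toOrderHom k = if (i : ℕ) < (k : ℕ) then 1 else 0 := rfl

lemma thrm_val {m : SimplexCategory} (i : Fin m.len) (k) :
    (((thrm i).toOrderHom k : Fin _) : ℕ) = if (i : ℕ) < (k : ℕ) then 1 else 0 := by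
  rw [thrm_apply, apply_ite (Fin.val), v0, v1]

lemma thrm_not_const {m : SimplexCategory} (i : Fin m.len) : ¬ IsConstHom (thrm i) := by
  intro h
  have h2 := congrArg Fin.val (h ⟨0, Nat.zero_lt_succ _⟩ ⟨(i:ℕ)+1, Nat.succ_lt_succ i.isLt⟩)
  rw [thrm_val, thrm_val] at h2
  simp only [Fin.val_mk] at h2
  rw [if_neg (by omega), if_pos (by omega)] at h2
  exact absurd h2 (by omega)

def ptm (m : SimplexCategory) : SCircle.obj (op m) := Quot.mk _ cstm

def thq {m : SimplexCategory} (i : Fin m.len) : SCircle.obj (op m) := Quot.mk _ (thrm i)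

lemma quot_eq_cases {m : SimplexCategory} {f g : m ⟶ SimplexCategory.mk 1}
    (h : (Quot.mk _ f : SCircle.obj (op m)) = Quot.mk _ g) :
    f = g ∨ (IsConstHom f ∧ IsConstHom g) := by
  have h' := Quot.eq.mp h
  clear h
  induction h' with
  | rel a b hab => exact Or.inr hab
  | refl a => exact Or.inl rfl
  | symm a b _ ih =>
      rcases ih with h | h
      · exact Or.inl h.symm
      · exact Or.inr ⟨h.2, h.1⟩
  | trans a b c _ _ ih1 ih2 =>
      rcases ih1 with h1 | h1
      · rcases ih2 with h2 | h2
        · exact Or.inl (h1.trans h2)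
        · exact Or.inr ⟨h1 ▸ h2.1, h2.2⟩
      · rcases ih2 with h2 | h2
        · exact Or.inr ⟨h1.1, h2 ▸ h1.2⟩
        · exact Or.inr ⟨h1.1, h2.2⟩

lemma thq_ne_ptm {m : SimplexCategory} (i : Fin m.len) : thq i ≠ ptm m := by
  intro h
  rcases quot_eq_cases h with h | h
  · exact thrm_not_const i (h ▸ cstm_const)
  · exact thrm_not_const i h.1

lemma thq_inj {m : SimplexCategory} {i j : Fin m.len} (h : thq i = thq j) : i = j := by
  rcases quot_eq_cases h with h | h
  · have h1 : (((thrm i).toOrderHom ⟨(i:ℕ)+1, Nat.succ_lt_succ i.isLt⟩ : Fin _) : ℕ)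
        = (((thrm j).toOrderHom ⟨(i:ℕ)+1, Nat.succ_lt_succ i.isLt⟩ : Fin _) : ℕ) := by rw [h]
    have h2 : (((thrm i).toOrderHom ⟨(j:ℕ)+1, Nat.succ_lt_succ j.isLt⟩ : Fin _) : ℕ)
        = (((thrm j).toOrderHom ⟨(j:ℕ)+1, Nat.succ_lt_succ j.isLt⟩ : Fin _) : ℕ) := by rw [h]
    rw [thrm_val, thrm_val] at h1 h2
    simp only [Fin.val_mk] at h1 h2
    apply Fin.ext
    split_ifs at h1 h2 <;> omega
  · exact absurd h.1 (thrm_not_const i)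

lemma hom_cases {m : SimplexCategory} (f : m ⟶ SimplexCategory.mk 1) :
    IsConstHom f ∨ ∃ i : Fin m.len, f = thrm i := by
  by_cases hf : IsConstHom f
  · exact Or.inl hf
  · right
    have h0 : ((f.toOrderHom 0 : Fin _) : ℕ) = 0 := by
      by_contra h
      apply hf
      intro k k'
      have hk : ∀ k'', ((f.toOrderHom k'' : Fin _) : ℕ) = 1 := fun k'' => by
        have hm := f.toOrderHom.monotone (Fin.zero_le k'')
        rw [Fin.le_def] at hm
        rcases fin2_val (f.toOrderHom 0) with hv | hv
        · exact absurd hv h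
        · rcases fin2_val (f.toOrderHom k'') with hv' | hv' <;> omega
      exact fin2_ext ((hk k).trans (hk k').symm)
    have hl : ((f.toOrderHom (Fin.last m.len) : Fin _) : ℕ) = 1 := by
      by_contra h
      apply hf
      intro k k'
      have hk : ∀ k'', ((f.toOrderHom k'' : Fin _) : ℕ) = 0 := fun k'' => by
        have hm := f.toOrderHom.monotone (Fin.le_last k'')
        rw [Fin.le_def] at hm
        rcases fin2_val (f.toOrderHom (Fin.last m.len)) with hv | hv
        · rcases fin2_val (f.toOrderHom k'') with hv' | hv' <;> omega
        · exact absurd hv h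
      exact fin2_ext ((hk k).trans (hk k').symm)
    classical
    have hP : ∃ n : ℕ, ∃ hn : n < m.len + 1, ((f.toOrderHom ⟨n, hn⟩ : Fin _) : ℕ) = 1 :=
      ⟨m.len, Nat.lt_succ_self _, by
        have : (Fin.last m.len) = ⟨m.len, Nat.lt_succ_self _⟩ := rfl
        rw [← this]; exact hl⟩
    obtain ⟨hjlt, hj1⟩ := Nat.find_spec hP
    have hjpos : 0 < Nat.find hP := by
      rcases Nat.eq_zero_or_pos (Nat.find hP) with h | h
      · exfalso
        have h00 : (⟨Nat.find hP, hjlt⟩ : Fin (m.len+1)) = 0 := Fin.ext (by rw [Fin.val_zero]; exact h)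
        rw [h00] at hj1
        omega
      · exact h
    refine ⟨⟨Nat.find hP - 1, by omega⟩, ?_⟩
    apply SimplexCategory.Hom.ext
    apply OrderHom.ext
    funext k
    apply fin2_ext
    rw [thrm_val]
    simp only [Fin.val_mk]
    by_cases hjk : Nat.find hP ≤ (k : ℕ)
    · rw [if_pos (by omega)]
      have hm := f.toOrderHom.monotone (show (⟨Nat.find hP, hjlt⟩ : Fin (m.len+1)) ≤ k from by
        rw [Fin.le_def]; simpa using hjk)
      rw [Fin.le_def] at hm
      rcases fin2_val (f.toOrderHom k) with hv | hv <;> omega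
    · rw [if_neg (by omega)]
      have hmin := Nat.find_min hP (m := (k : ℕ)) (by omega)
      push_neg at hmin
      have h2 := hmin k.isLt
      simp only [Fin.eta] at h2
      rcases fin2_val (f.toOrderHom k) with hv | hv
      · exact hv
      · exact absurd hv h2

/-- Classification of points of the circle. -/
lemma circle_cases {m : SimplexCategory} (q : SCircle.obj (op m)) :
    q = ptm m ∨ ∃ i : Fin m.len, q = thq i := by
  induction q using Quot.ind with
  | _ f =>
    rcases hom_cases f with hf | ⟨i, hf⟩
    · exact Or.inl (Quot.sound ⟨hf, cstm_const⟩)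
    · exact Or.inr ⟨i, by rw [hf]; rfl⟩

end Dev
section Dev2
open SimplexCategory

lemma scircle_map_mk {m' m : SimplexCategory} (θ : m' ⟶ m) (f : m ⟶ SimplexCategory.mk 1) :
    SCircle.map θ.op (Quot.mk _ f) = (Quot.mk _ (θ ≫ f) : SCircle.obj (op m')) := rfl

lemma scircle_map_ptm {m' m : SimplexCategory} (θ : m' ⟶ m) :
    SCircle.map θ.op (ptm m) = ptm m' := by
  rw [ptm, scircle_map_mk]
  exact Quot.sound ⟨fun _ _ => rfl, cstm_const⟩

def edg {m : SimplexCategory} (a b : Fin (m.len+1)) : SimplexCategory.mk 1 ⟶ m :=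
  SimplexCategory.Hom.mk ⟨fun k => if (k:ℕ) = 0 then a else a ⊔ b, by
    intro k k' h
    dsimp
    by_cases h0 : (k':ℕ) = 0
    · rw [Fin.le_def] at h
      rw [if_pos (by omega), if_pos h0]
    · rw [if_neg h0]
      split
      · exact le_sup_left
      · exact le_rfl⟩

lemma edg_apply {m : SimplexCategory} (a b : Fin (m.len+1)) (k) :
    (edg a b).toOrderHom k = if (k:ℕ) = 0 then a else a ⊔ b := rfl

lemma edg_apply0 {m : SimplexCategory} (a b : Fin (m.len+1)) :
    (edg a b).toOrderHom 0 = a := rfl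

lemma edg_apply1 {m : SimplexCategory} (a b : Fin (m.len+1)) (h : a ≤ b) :
    (edg a b).toOrderHom 1 = b := by
  rw [edg_apply, if_neg (by rw [v1]; omega), sup_eq_right.mpr h]

lemma edg_apply_last {m : SimplexCategory} (a b : Fin (m.len+1)) (h : a ≤ b) :
    (edg a b).toOrderHom (Fin.last (SimplexCategory.mk 1).len) = b := by
  have : Fin.last (SimplexCategory.mk 1).len = 1 := rfl
  rw [this, edg_apply1 a b h]

lemma edg_comp {m m' : SimplexCategory} (a b : Fin (m.len+1)) (h : a ≤ b) (φ : m ⟶ m') :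
    edg a b ≫ φ = edg (φ.toOrderHom a) (φ.toOrderHom b) := by
  apply SimplexCategory.Hom.ext
  apply OrderHom.ext
  funext k
  rw [SimplexCategory.comp_toOrderHom]
  show φ.toOrderHom ((edg a b).toOrderHom k) = _
  rw [edg_apply, edg_apply]
  by_cases h0 : (k:ℕ) = 0
  · rw [if_pos h0, if_pos h0]
  · rw [if_neg h0, if_neg h0, sup_eq_right.mpr h,
      sup_eq_right.mpr (φ.toOrderHom.monotone h)]

def vtx {m : SimplexCategory} (a : Fin (m.len+1)) : SimplexCategory.mk 0 ⟶ m :=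
  SimplexCategory.Hom.mk ⟨fun _ => a, monotone_const⟩

def toPt : SimplexCategory.mk 1 ⟶ SimplexCategory.mk 0 :=
  SimplexCategory.Hom.mk ⟨fun _ => 0, monotone_const⟩

lemma edg_self {m : SimplexCategory} (a : Fin (m.len+1)) : edg a a = toPt ≫ vtx a := by
  apply SimplexCategory.Hom.ext
  apply OrderHom.ext
  funext k
  rw [SimplexCategory.comp_toOrderHom]
  show (edg a a).toOrderHom k = a
  rw [edg_apply]
  split <;> simp

def tri {m : SimplexCategory} (a b c : Fin (m.len+1)) : SimplexCategory.mk 2 ⟶ m :=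
  SimplexCategory.Hom.mk ⟨fun k => if (k:ℕ) = 0 then a else if (k:ℕ) = 1 then a ⊔ b else a ⊔ b ⊔ c, by
    intro k k' h
    rw [Fin.le_def] at h
    dsimp
    by_cases h0 : (k':ℕ) = 0
    · rw [if_pos (by omega), if_pos h0]
    · rw [if_neg h0]
      by_cases h1 : (k':ℕ) = 1
      · rw [if_pos h1]
        by_cases hk0 : (k:ℕ) = 0
        · rw [if_pos hk0]; exact le_sup_left
        · rw [if_neg hk0, if_pos (by omega)]
      · rw [if_neg h1]
        by_cases hk0 : (k:ℕ) = 0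
        · rw [if_pos hk0]; exact le_trans le_sup_left le_sup_left
        · rw [if_neg hk0]
          by_cases hk1 : (k:ℕ) = 1
          · rw [if_pos hk1]; exact le_sup_left
          · rw [if_neg hk1]⟩

lemma tri_apply0 {m : SimplexCategory} (a b c : Fin (m.len+1)) :
    (tri a b c).toOrderHom 0 = a := rfl

lemma tri_apply1 {m : SimplexCategory} (a b c : Fin (m.len+1)) (hab : a ≤ b) :
    (tri a b c).toOrderHom 1 = b := by
  show (if ((1 : Fin ((SimplexCategory.mk 2).len+1)):ℕ) = 0 then a
    else if ((1 : Fin ((SimplexCategory.mk 2).len+1)):ℕ) = 1 then a ⊔ b else a ⊔ b ⊔ c) = b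
  have hv : ((1 : Fin ((SimplexCategory.mk 2).len+1)):ℕ) = 1 := rfl
  rw [hv]
  simp [sup_eq_right.mpr hab]

lemma tri_apply2 {m : SimplexCategory} (a b c : Fin (m.len+1)) (hab : a ≤ b) (hbc : b ≤ c) :
    (tri a b c).toOrderHom 2 = c := by
  show (if ((2 : Fin ((SimplexCategory.mk 2).len+1)):ℕ) = 0 then a
    else if ((2 : Fin ((SimplexCategory.mk 2).len+1)):ℕ) = 1 then a ⊔ b else a ⊔ b ⊔ c) = c
  have hv : ((2 : Fin ((SimplexCategory.mk 2).len+1)):ℕ) = 2 := rfl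
  rw [hv]
  rw [if_neg (by omega), if_neg (by omega), sup_eq_right.mpr hab, sup_eq_right.mpr hbc]

lemma w0 : ((0 : Fin ((SimplexCategory.mk 2).len+1)) : ℕ) = 0 := rfl
lemma w1 : ((1 : Fin ((SimplexCategory.mk 2).len+1)) : ℕ) = 1 := rfl
lemma w2 : ((2 : Fin ((SimplexCategory.mk 2).len+1)) : ℕ) = 2 := rfl

-- the three edges of a triangle
lemma tri_edge01 {m : SimplexCategory} (a b c : Fin (m.len+1)) (hab : a ≤ b) :
    edg (0 : Fin ((SimplexCategory.mk 2).len+1)) 1 ≫ tri a b c = edg a b := by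
  rw [edg_comp _ _ (by rw [Fin.le_def, w0, w1]; omega) (tri a b c), tri_apply0, tri_apply1 a b c hab]

lemma tri_edge12 {m : SimplexCategory} (a b c : Fin (m.len+1)) (hab : a ≤ b) (hbc : b ≤ c) :
    edg (1 : Fin ((SimplexCategory.mk 2).len+1)) 2 ≫ tri a b c = edg b c := by
  rw [edg_comp _ _ (by rw [Fin.le_def, w1, w2]; omega) (tri a b c),
    tri_apply1 a b c hab, tri_apply2 a b c hab hbc]

lemma tri_edge02 {m : SimplexCategory} (a b c : Fin (m.len+1)) (hab : a ≤ b) (hbc : b ≤ c) :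
    edg (0 : Fin ((SimplexCategory.mk 2).len+1)) 2 ≫ tri a b c = edg a c := by
  rw [edg_comp _ _ (by rw [Fin.le_def, w0, w2]; omega) (tri a b c),
    tri_apply0, tri_apply2 a b c hab hbc]

end Dev2
section Dev3
open SimplexCategory

lemma comp_thrm_val {m' m : SimplexCategory} (θ : m' ⟶ m) (i : Fin m.len) (k) :
    (((θ ≫ thrm i).toOrderHom k : Fin _) : ℕ)
      = if (i:ℕ) < ((θ.toOrderHom k : Fin _) : ℕ) then 1 else 0 := by
  rw [SimplexCategory.comp_toOrderHom]
  exact thrm_val i (θ.toOrderHom k)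

lemma comp_thrm_eq_thq {m' m : SimplexCategory} (θ : m' ⟶ m) (i : Fin m.len) (j : Fin m'.len) :
    (Quot.mk _ (θ ≫ thrm i) : SCircle.obj (op m')) = thq j ↔
      ((θ.toOrderHom j.castSucc : ℕ) ≤ (i:ℕ) ∧ (i:ℕ) < (θ.toOrderHom j.succ : ℕ)) := by
  constructor
  · intro h
    rcases quot_eq_cases h with h | h
    · constructor
      · have h1 := congrArg (fun f => ((SimplexCategory.Hom.toOrderHom f j.castSucc : Fin _) : ℕ)) h
        dsimp only [] at h1
        rw [comp_thrm_val, thrm_val, Fin.coe_castSucc, if_neg (lt_irrefl _)] at h1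
        by_contra hc
        rw [if_pos (by omega)] at h1
        exact one_ne_zero h1
      · have h1 := congrArg (fun f => ((SimplexCategory.Hom.toOrderHom f j.succ : Fin _) : ℕ)) h
        dsimp only [] at h1
        rw [comp_thrm_val, thrm_val, Fin.val_succ, if_pos (Nat.lt_succ_self _)] at h1
        by_contra hc
        rw [if_neg (by omega)] at h1
        exact zero_ne_one h1
    · exact absurd h.2 (thrm_not_const j)
  · rintro ⟨h1, h2⟩
    apply congrArg (Quot.mk _)
    apply SimplexCategory.Hom.ext
    apply OrderHom.ext
    funext k
    apply fin2_ext
    rw [comp_thrm_val, thrm_val]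
    by_cases hc : (j:ℕ) < (k:ℕ)
    · rw [if_pos hc, if_pos ?_]
      have hm := θ.toOrderHom.monotone (show j.succ ≤ k from by
        rw [Fin.le_def, Fin.val_succ]; omega)
      rw [Fin.le_def] at hm
      omega
    · rw [if_neg hc, if_neg ?_]
      have hm := θ.toOrderHom.monotone (show k ≤ j.castSucc from by
        rw [Fin.le_def, Fin.coe_castSucc]; omega)
      rw [Fin.le_def] at hm
      omega

lemma comp_thrm_eq_ptm {m' m : SimplexCategory} (θ : m' ⟶ m) (i : Fin m.len) :
    (Quot.mk _ (θ ≫ thrm i) : SCircle.obj (op m')) = ptm m' ↔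
      ((i:ℕ) < (θ.toOrderHom 0 : ℕ) ∨ (θ.toOrderHom (Fin.last m'.len) : ℕ) ≤ (i:ℕ)) := by
  constructor
  · intro h
    have hcst : IsConstHom (θ ≫ thrm i) := by
      rcases quot_eq_cases h with h | h
      · rw [h]; exact cstm_const
      · exact h.1
    by_cases hc : (i:ℕ) < (θ.toOrderHom 0 : ℕ)
    · exact Or.inl hc
    · right
      have h1 := congrArg Fin.val (hcst (Fin.last m'.len) 0)
      rw [comp_thrm_val, comp_thrm_val] at h1
      rw [if_neg hc] at h1
      by_contra hc2
      rw [if_pos (by omega)] at h1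
      exact absurd h1 (by omega)
  · intro h
    apply Quot.sound
    refine ⟨fun k k' => ?_, cstm_const⟩
    apply fin2_ext
    rw [comp_thrm_val, comp_thrm_val]
    rcases h with h | h
    · have hm := θ.toOrderHom.monotone (Fin.zero_le k)
      have hm' := θ.toOrderHom.monotone (Fin.zero_le k')
      rw [Fin.le_def] at hm hm'
      rw [if_pos (by omega), if_pos (by omega)]
    · have hm := θ.toOrderHom.monotone (show k ≤ Fin.last m'.len from Fin.le_last k)
      have hm' := θ.toOrderHom.monotone (show k' ≤ Fin.last m'.len from Fin.le_last k')
      rw [Fin.le_def] at hm hm'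
      rw [if_neg (by omega), if_neg (by omega)]

end Dev3
section Dev4
open SimplexCategory
open scoped Classical
variable {R : Type} [CommSemiring R]

lemma scircle_map_thq {m' m : SimplexCategory} (θ : m' ⟶ m) (i : Fin m.len) :
    SCircle.map θ.op (thq i) = (Quot.mk _ (θ ≫ thrm i) : SCircle.obj (op m')) := rfl

lemma canon_apply_ptm {m : SimplexCategory} (b : R) (c : Fin m.len → R) :
    (Finsupp.single (ptm m) b + ∑ i : Fin m.len, Finsupp.single (thq i) (c i)) (ptm m) = b := by
  classical
  rw [Finsupp.add_apply, Finsupp.single_eq_same, Finsupp.finset_sum_apply]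
  rw [Finset.sum_eq_zero fun i _ => Finsupp.single_eq_of_ne' (thq_ne_ptm i)]
  exact add_zero b

lemma canon_apply_thq {m : SimplexCategory} (b : R) (c : Fin m.len → R) (j : Fin m.len) :
    (Finsupp.single (ptm m) b + ∑ i : Fin m.len, Finsupp.single (thq i) (c i)) (thq j) = c j := by
  classical
  rw [Finsupp.add_apply, Finsupp.single_eq_of_ne' (fun h => thq_ne_ptm j h.symm),
    Finsupp.finset_sum_apply]
  rw [Finset.sum_eq_single j (fun i _ hne => Finsupp.single_eq_of_ne' (fun h => hne (thq_inj h)))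
    (fun h => absurd (Finset.mem_univ j) h)]
  rw [Finsupp.single_eq_same, zero_add]

lemma decomp {m : SimplexCategory} (p : SCircle.obj (op m) →₀ R) :
    p = Finsupp.single (ptm m) (p (ptm m)) + ∑ i : Fin m.len, Finsupp.single (thq i) (p (thq i)) := by
  ext q
  rcases circle_cases q with h | ⟨i, h⟩
  · rw [h, canon_apply_ptm]
  · rw [h, canon_apply_thq]

lemma sum_canon {m : SimplexCategory} (b : R) (c : Fin m.len → R) :
    (Finsupp.single (ptm m) b + ∑ i : Fin m.len, Finsupp.single (thq i) (c i)).sum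
      (fun _ r => r) = b + ∑ i : Fin m.len, c i := by
  classical
  rw [Finsupp.sum_add_index' (fun _ => rfl) (fun _ _ _ => rfl),
    ← Finsupp.sum_finset_sum_index (fun _ => rfl) (fun _ _ _ => rfl),
    Finsupp.sum_single_index rfl]
  congr 1
  exact Finset.sum_congr rfl fun i _ => Finsupp.sum_single_index rfl

lemma dist_sum {m : SimplexCategory} (p : DistR R (SCircle.obj (op m))) :
    p.1 (ptm m) + ∑ i : Fin m.len, p.1 (thq i) = 1 := by
  have h := p.2
  rw [decomp p.1, sum_canon] at h
  exact h

lemma mapDomain_canon_apply {m' m : SimplexCategory} (θ : m' ⟶ m)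
    (p : SCircle.obj (op m) →₀ R) (q : SCircle.obj (op m')) :
    Finsupp.mapDomain (SCircle.map θ.op) p q
      = (if ptm m' = q then p (ptm m) else 0)
        + ∑ i : Fin m.len,
            (if (Quot.mk _ (θ ≫ thrm i) : SCircle.obj (op m')) = q then p (thq i) else 0) := by
  classical
  conv_lhs => rw [decomp p]
  rw [Finsupp.mapDomain_add, Finsupp.mapDomain_single, Finsupp.mapDomain_finset_sum,
    scircle_map_ptm]
  rw [Finsupp.add_apply, Finsupp.finset_sum_apply, Finsupp.single_apply]
  congr 1
  refine Finset.sum_congr rfl fun i _ => ?_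
  rw [Finsupp.mapDomain_single, scircle_map_thq]
  exact Finsupp.single_apply

end Dev4
section Dev5
open SimplexCategory
open scoped Classical
variable {R : Type} [CommSemiring R] {X : SSet.{0}}

lemma lenle0 : (SimplexCategory.mk 0).len ≤ 2 := by simp [SimplexCategory.len_mk]
lemma lenle1 : (SimplexCategory.mk 1).len ≤ 2 := by simp [SimplexCategory.len_mk]
lemma lenle2 : (SimplexCategory.mk 2).len ≤ 2 := by simp [SimplexCategory.len_mk]

def ob0 : SimplexCategory.Truncated 2 := ⟨SimplexCategory.mk 0, lenle0⟩
def ob1 : SimplexCategory.Truncated 2 := ⟨SimplexCategory.mk 1, lenle1⟩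
def ob2 : SimplexCategory.Truncated 2 := ⟨SimplexCategory.mk 2, lenle2⟩

def θ1 : Fin (SimplexCategory.mk 1).len := ⟨0, by rw [SimplexCategory.len_mk]; try omega⟩
def ι0 : Fin (SimplexCategory.mk 2).len := ⟨0, by rw [SimplexCategory.len_mk]; try omega⟩
def ι1 : Fin (SimplexCategory.mk 2).len := ⟨1, by rw [SimplexCategory.len_mk]; try omega⟩

lemma sum1 (f : Fin (SimplexCategory.mk 1).len → R) : ∑ i, f i = f θ1 := by
  refine Fintype.sum_eq_single θ1 fun i hi => absurd ?_ hi
  apply Fin.ext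
  have h2 := i.isLt.trans_eq (SimplexCategory.len_mk 1)
  show (i : ℕ) = 0
  omega

lemma fin2len_cases (i : Fin (SimplexCategory.mk 2).len) : i = ι0 ∨ i = ι1 := by
  have h2 := i.isLt.trans_eq (SimplexCategory.len_mk 2)
  rcases (by omega : (i:ℕ) = 0 ∨ (i:ℕ) = 1) with h | h
  · exact Or.inl (Fin.ext h)
  · exact Or.inr (Fin.ext h)

lemma ι0_ne_ι1 : ι0 ≠ ι1 := by
  intro h
  have := congrArg Fin.val h
  simp [ι0, ι1] at this

lemma sum2 (f : Fin (SimplexCategory.mk 2).len → R) : ∑ i, f i = f ι0 + f ι1 := by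
  have huniv : (Finset.univ : Finset (Fin (SimplexCategory.mk 2).len)) = {ι0, ι1} := by
    ext i
    simp only [Finset.mem_univ, Finset.mem_insert, Finset.mem_singleton, true_iff]
    exact fin2len_cases i
  rw [huniv, Finset.sum_insert (by simp only [Finset.mem_singleton]; exact ι0_ne_ι1), Finset.sum_singleton]

/-- edge coefficient -/
noncomputable def Ecf (g : (SSet.truncation 2).obj X ⟶ (SSet.truncation 2).obj (DRobj R SCircle))
    {m : SimplexCategory} (a b : Fin (m.len+1)) (x : X.obj (op m)) : R :=
  (g.app (op ob1) (X.map (edg a b).op x) : DistR R _).1 (thq θ1)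

/-- basepoint coefficient -/
noncomputable def Bcf (g : (SSet.truncation 2).obj X ⟶ (SSet.truncation 2).obj (DRobj R SCircle))
    {m : SimplexCategory} (a b : Fin (m.len+1)) (x : X.obj (op m)) : R :=
  (g.app (op ob1) (X.map (edg a b).op x) : DistR R _).1 (ptm (SimplexCategory.mk 1))


lemma theta1_castSucc : (θ1.castSucc : Fin ((SimplexCategory.mk 1).len + 1)) = 0 := rfl

lemma theta1_succ : (θ1.succ : Fin ((SimplexCategory.mk 1).len + 1)) = 1 := by
  apply Fin.ext
  rw [Fin.val_succ, v1]
  rfl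

lemma last1_eq_one : (Fin.last (SimplexCategory.mk 1).len : Fin ((SimplexCategory.mk 1).len + 1)) = 1 := by
  apply Fin.ext
  rw [Fin.val_last, v1, SimplexCategory.len_mk]

/-- evaluation of a mapped distribution at the nondegenerate 1-simplex -/
lemma eval_thq {m : SimplexCategory} (θ : SimplexCategory.mk 1 ⟶ m)
    (p : DistR R (SCircle.obj (op m))) :
    (DistR.map (SCircle.map θ.op) p).1 (thq θ1)
      = ∑ i : Fin m.len,
          (if (θ.toOrderHom 0 : ℕ) ≤ (i:ℕ) ∧ (i:ℕ) < (θ.toOrderHom 1 : ℕ)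
            then p.1 (thq i) else 0) := by
  show Finsupp.mapDomain (SCircle.map θ.op) p.1 (thq θ1) = _
  rw [mapDomain_canon_apply, if_neg (fun h => thq_ne_ptm θ1 h.symm), zero_add]
  refine Finset.sum_congr rfl fun i _ => ?_
  congr 1
  rw [comp_thrm_eq_thq, theta1_castSucc, theta1_succ]

/-- evaluation of a mapped distribution at the basepoint -/
lemma eval_ptm {m : SimplexCategory} (θ : SimplexCategory.mk 1 ⟶ m)
    (p : DistR R (SCircle.obj (op m))) :
    (DistR.map (SCircle.map θ.op) p).1 (ptm (SimplexCategory.mk 1))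
      = p.1 (ptm m) + ∑ i : Fin m.len,
          (if ((i:ℕ) < (θ.toOrderHom 0 : ℕ) ∨ (θ.toOrderHom 1 : ℕ) ≤ (i:ℕ))
            then p.1 (thq i) else 0) := by
  show Finsupp.mapDomain (SCircle.map θ.op) p.1 (ptm (SimplexCategory.mk 1)) = _
  rw [mapDomain_canon_apply, if_pos rfl]
  congr 1
  refine Finset.sum_congr rfl fun i _ => ?_
  congr 1
  rw [comp_thrm_eq_ptm, last1_eq_one]

variable {X : SSet.{0}}

lemma Ecf_eval (g : (SSet.truncation 2).obj X ⟶ (SSet.truncation 2).obj (DRobj R SCircle))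
    {m : SimplexCategory} (hm : m.len ≤ 2) (a b : Fin (m.len+1)) (hab : a ≤ b)
    (y : X.obj (op m)) :
    Ecf g a b y = ∑ i : Fin m.len,
      (if (a:ℕ) ≤ (i:ℕ) ∧ (i:ℕ) < (b:ℕ)
        then ((g.app (op (⟨m, hm⟩ : SimplexCategory.Truncated 2)) y : DistR R _)).1 (thq i)
        else 0) := by
  have hnat : (g.app (op ob1) (X.map (edg a b).op y)
        : DistR R (SCircle.obj (op (SimplexCategory.mk 1))))
      = DistR.map (SCircle.map (edg a b).op)
          (g.app (op (⟨m, hm⟩ : SimplexCategory.Truncated 2)) y) :=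
    NatTrans.naturality_apply g (show ob1 ⟶ (⟨m, hm⟩ : SimplexCategory.Truncated 2) from ObjectProperty.homMk (edg a b)).op y
  show (g.app (op ob1) (X.map (edg a b).op y)
      : DistR R (SCircle.obj (op (SimplexCategory.mk 1)))).1 (thq θ1) = _
  rw [hnat]
  refine (eval_thq (edg a b) _).trans ?_
  rw [edg_apply0, edg_apply1 a b hab]

lemma Bcf_eval (g : (SSet.truncation 2).obj X ⟶ (SSet.truncation 2).obj (DRobj R SCircle))
    {m : SimplexCategory} (hm : m.len ≤ 2) (a b : Fin (m.len+1)) (hab : a ≤ b)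
    (y : X.obj (op m)) :
    Bcf g a b y = ((g.app (op (⟨m, hm⟩ : SimplexCategory.Truncated 2)) y : DistR R _)).1 (ptm m)
      + ∑ i : Fin m.len,
        (if ((i:ℕ) < (a:ℕ) ∨ (b:ℕ) ≤ (i:ℕ))
          then ((g.app (op (⟨m, hm⟩ : SimplexCategory.Truncated 2)) y : DistR R _)).1 (thq i)
          else 0) := by
  have hnat : (g.app (op ob1) (X.map (edg a b).op y)
        : DistR R (SCircle.obj (op (SimplexCategory.mk 1))))
      = DistR.map (SCircle.map (edg a b).op)
          (g.app (op (⟨m, hm⟩ : SimplexCategory.Truncated 2)) y) :=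
    NatTrans.naturality_apply g (show ob1 ⟶ (⟨m, hm⟩ : SimplexCategory.Truncated 2) from ObjectProperty.homMk (edg a b)).op y
  show (g.app (op ob1) (X.map (edg a b).op y)
      : DistR R (SCircle.obj (op (SimplexCategory.mk 1)))).1 (ptm (SimplexCategory.mk 1)) = _
  rw [hnat]
  refine (eval_ptm (edg a b) _).trans ?_
  rw [edg_apply0, edg_apply1 a b hab]

end Dev5
section Dev6
open SimplexCategory
open scoped Classical
variable {R : Type} [CommSemiring R] {X : SSet.{0}}
variable (g : (SSet.truncation 2).obj X ⟶ (SSet.truncation 2).obj (DRobj R SCircle))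

lemma ival0 : ((ι0 : Fin (SimplexCategory.mk 2).len) : ℕ) = 0 := rfl
lemma ival1 : ((ι1 : Fin (SimplexCategory.mk 2).len) : ℕ) = 1 := rfl

lemma edge_pull {m m' : SimplexCategory} (θ : m' ⟶ m) (a b : Fin (m'.len+1)) (hab : a ≤ b)
    (x : X.obj (op m)) :
    X.map (edg (θ.toOrderHom a) (θ.toOrderHom b)).op x = X.map (edg a b).op (X.map θ.op x) := by
  rw [← edg_comp a b hab θ, CategoryTheory.op_comp, FunctorToTypes.map_comp_apply]

lemma Ecf_pull {m m' : SimplexCategory} (θ : m' ⟶ m) (a b : Fin (m'.len+1)) (hab : a ≤ b)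
    (x : X.obj (op m)) :
    Ecf g (θ.toOrderHom a) (θ.toOrderHom b) x = Ecf g a b (X.map θ.op x) := by
  show (g.app (op ob1) (X.map (edg (θ.toOrderHom a) (θ.toOrderHom b)).op x) : DistR R _).1 (thq θ1)
    = (g.app (op ob1) (X.map (edg a b).op (X.map θ.op x)) : DistR R _).1 (thq θ1)
  rw [edge_pull θ a b hab x]

lemma Bcf_pull {m m' : SimplexCategory} (θ : m' ⟶ m) (a b : Fin (m'.len+1)) (hab : a ≤ b)
    (x : X.obj (op m)) :
    Bcf g (θ.toOrderHom a) (θ.toOrderHom b) x = Bcf g a b (X.map θ.op x) := by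
  show (g.app (op ob1) (X.map (edg (θ.toOrderHom a) (θ.toOrderHom b)).op x) : DistR R _).1 (ptm _)
    = (g.app (op ob1) (X.map (edg a b).op (X.map θ.op x)) : DistR R _).1 (ptm _)
  rw [edge_pull θ a b hab x]

lemma BE_one {m : SimplexCategory} (a b : Fin (m.len+1)) (x : X.obj (op m)) :
    Bcf g a b x + Ecf g a b x = 1 := by
  have h := dist_sum (R := R) (m := SimplexCategory.mk 1)
    (g.app (op ob1) (X.map (edg a b).op x))
  rw [sum1] at h
  exact h

lemma sum0 (f : Fin (SimplexCategory.mk 0).len → R) : ∑ i, f i = 0 := by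
  haveI : IsEmpty (Fin (SimplexCategory.mk 0).len) :=
    ⟨fun i => absurd (i.isLt.trans_eq (SimplexCategory.len_mk 0)) (by omega)⟩
  rw [Finset.univ_eq_empty, Finset.sum_empty]

lemma vtx_apply {m : SimplexCategory} (a : Fin (m.len+1)) (k) : (vtx a).toOrderHom k = a := rfl

lemma Ecf_self {m : SimplexCategory} (a : Fin (m.len+1)) (x : X.obj (op m)) :
    Ecf g a a x = 0 := by
  have h := Ecf_pull g (vtx a) 0 0 le_rfl x
  rw [vtx_apply] at h
  rw [h]
  refine (Ecf_eval g lenle0 0 0 le_rfl _).trans ?_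
  exact sum0 _

section Tri
variable {m : SimplexCategory} (a b c : Fin (m.len+1))

lemma le01 : (0 : Fin ((SimplexCategory.mk 2).len+1)) ≤ 1 := by rw [Fin.le_def, w0, w1]; omega
lemma le12 : (1 : Fin ((SimplexCategory.mk 2).len+1)) ≤ 2 := by rw [Fin.le_def, w1, w2]; omega
lemma le02 : (0 : Fin ((SimplexCategory.mk 2).len+1)) ≤ 2 := by rw [Fin.le_def, w0, w2]; omega

lemma tri_E01 (hab : a ≤ b) (x : X.obj (op m)) :
    Ecf g a b x
      = (g.app (op (⟨SimplexCategory.mk 2, lenle2⟩ : SimplexCategory.Truncated 2))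
          (X.map (tri a b c).op x) : DistR R _).1 (thq ι0) := by
  have h := Ecf_pull g (tri a b c) 0 1 le01 x
  rw [tri_apply0, tri_apply1 a b c hab] at h
  rw [h]
  refine (Ecf_eval g lenle2 0 1 le01 _).trans ?_
  rw [sum2, if_pos (by rw [w0, w1, ival0]; omega), if_neg (by rw [w0, w1, ival1]; omega), add_zero]

lemma tri_E12 (hab : a ≤ b) (hbc : b ≤ c) (x : X.obj (op m)) :
    Ecf g b c x
      = (g.app (op (⟨SimplexCategory.mk 2, lenle2⟩ : SimplexCategory.Truncated 2))
          (X.map (tri a b c).op x) : DistR R _).1 (thq ι1) := by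
  have h := Ecf_pull g (tri a b c) 1 2 le12 x
  rw [tri_apply1 a b c hab, tri_apply2 a b c hab hbc] at h
  rw [h]
  refine (Ecf_eval g lenle2 1 2 le12 _).trans ?_
  rw [sum2, if_neg (by rw [w1, w2, ival0]; omega), if_pos (by rw [w1, w2, ival1]; omega), zero_add]

lemma tri_E02 (hab : a ≤ b) (hbc : b ≤ c) (x : X.obj (op m)) :
    Ecf g a c x
      = (g.app (op (⟨SimplexCategory.mk 2, lenle2⟩ : SimplexCategory.Truncated 2))
          (X.map (tri a b c).op x) : DistR R _).1 (thq ι0)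
        + (g.app (op (⟨SimplexCategory.mk 2, lenle2⟩ : SimplexCategory.Truncated 2))
          (X.map (tri a b c).op x) : DistR R _).1 (thq ι1) := by
  have h := Ecf_pull g (tri a b c) 0 2 le02 x
  rw [tri_apply0, tri_apply2 a b c hab hbc] at h
  rw [h]
  refine (Ecf_eval g lenle2 0 2 le02 _).trans ?_
  rw [sum2, if_pos (by rw [w0, w2, ival0]; omega), if_pos (by rw [w0, w2, ival1]; omega)]

lemma tri_B01 (hab : a ≤ b) (x : X.obj (op m)) :
    Bcf g a b x
      = (g.app (op (⟨SimplexCategory.mk 2, lenle2⟩ : SimplexCategory.Truncated 2))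
          (X.map (tri a b c).op x) : DistR R _).1 (ptm (SimplexCategory.mk 2))
        + (g.app (op (⟨SimplexCategory.mk 2, lenle2⟩ : SimplexCategory.Truncated 2))
          (X.map (tri a b c).op x) : DistR R _).1 (thq ι1) := by
  have h := Bcf_pull g (tri a b c) 0 1 le01 x
  rw [tri_apply0, tri_apply1 a b c hab] at h
  rw [h]
  refine (Bcf_eval g lenle2 0 1 le01 _).trans ?_
  rw [sum2, if_neg (by rw [w0, w1, ival0]; omega), if_pos (by rw [w0, w1, ival1]; omega), zero_add]

lemma tri_B12 (hab : a ≤ b) (hbc : b ≤ c) (x : X.obj (op m)) :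
    Bcf g b c x
      = (g.app (op (⟨SimplexCategory.mk 2, lenle2⟩ : SimplexCategory.Truncated 2))
          (X.map (tri a b c).op x) : DistR R _).1 (ptm (SimplexCategory.mk 2))
        + (g.app (op (⟨SimplexCategory.mk 2, lenle2⟩ : SimplexCategory.Truncated 2))
          (X.map (tri a b c).op x) : DistR R _).1 (thq ι0) := by
  have h := Bcf_pull g (tri a b c) 1 2 le12 x
  rw [tri_apply1 a b c hab, tri_apply2 a b c hab hbc] at h
  rw [h]
  refine (Bcf_eval g lenle2 1 2 le12 _).trans ?_
  rw [sum2, if_pos (by rw [w1, w2, ival0]; omega), if_neg (by rw [w1, w2, ival1]; omega), add_zero]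

lemma tri_B02 (hab : a ≤ b) (hbc : b ≤ c) (x : X.obj (op m)) :
    Bcf g a c x
      = (g.app (op (⟨SimplexCategory.mk 2, lenle2⟩ : SimplexCategory.Truncated 2))
          (X.map (tri a b c).op x) : DistR R _).1 (ptm (SimplexCategory.mk 2)) := by
  have h := Bcf_pull g (tri a b c) 0 2 le02 x
  rw [tri_apply0, tri_apply2 a b c hab hbc] at h
  rw [h]
  refine (Bcf_eval g lenle2 0 2 le02 _).trans ?_
  rw [sum2, if_neg (by rw [w0, w2, ival0]; omega), if_neg (by rw [w0, w2, ival1]; omega)]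
  rw [add_zero, add_zero]

lemma rel_E (hab : a ≤ b) (hbc : b ≤ c) (x : X.obj (op m)) :
    Ecf g a c x = Ecf g a b x + Ecf g b c x := by
  rw [tri_E01 g a b c hab x, tri_E12 g a b c hab hbc x, tri_E02 g a b c hab hbc x]

lemma rel_B_left (hab : a ≤ b) (hbc : b ≤ c) (x : X.obj (op m)) :
    Bcf g a b x = Bcf g a c x + Ecf g b c x := by
  rw [tri_B01 g a b c hab x, tri_B02 g a b c hab hbc x, tri_E12 g a b c hab hbc x]

lemma rel_B_right (hab : a ≤ b) (hbc : b ≤ c) (x : X.obj (op m)) :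
    Bcf g b c x = Bcf g a c x + Ecf g a b x := by
  rw [tri_B12 g a b c hab hbc x, tri_B02 g a b c hab hbc x, tri_E01 g a b c hab x]

end Tri

lemma B_formula {m : SimplexCategory} (u v : Fin (m.len+1)) (huv : u ≤ v) (x : X.obj (op m)) :
    Bcf g u v x
      = Bcf g 0 (Fin.last m.len) x + Ecf g v (Fin.last m.len) x + Ecf g 0 u x := by
  rw [rel_B_right g 0 u v (Fin.zero_le u) huv x,
    rel_B_left g 0 v (Fin.last m.len) (Fin.zero_le v) (Fin.le_last v) x]

lemma telescope {m : SimplexCategory} (x : X.obj (op m)) :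
    ∀ (d : ℕ) (a b : Fin (m.len+1)), (a:ℕ) ≤ (b:ℕ) → (b:ℕ) - (a:ℕ) = d →
    Ecf g a b x = ∑ i : Fin m.len,
      (if (a:ℕ) ≤ (i:ℕ) ∧ (i:ℕ) < (b:ℕ) then Ecf g i.castSucc i.succ x else 0) := by
  intro d
  induction d with
  | zero =>
      intro a b hab hd
      have hab' : a = b := Fin.ext (by omega)
      subst hab'
      rw [Ecf_self g a x]
      exact (Finset.sum_eq_zero fun i _ => if_neg (by omega)).symm
  | succ d ih =>
      intro a b hab hd
      have halt : (a:ℕ) < (b:ℕ) := by omega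
      have hb := b.isLt
      obtain ⟨i₀, hva⟩ : ∃ i₀ : Fin m.len, (i₀:ℕ) = (a:ℕ) := ⟨⟨(a:ℕ), by omega⟩, rfl⟩
      have hca : i₀.castSucc = a := Fin.ext (by rw [Fin.coe_castSucc, hva])
      have hsa : ((i₀.succ : Fin (m.len+1)) : ℕ) = (a:ℕ) + 1 := by rw [Fin.val_succ, hva]
      have hle1 : a ≤ i₀.succ := by rw [Fin.le_def, hsa]; omega
      have hle2 : i₀.succ ≤ b := by rw [Fin.le_def, hsa]; omega
      rw [rel_E g a i₀.succ b hle1 hle2 x]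
      rw [ih i₀.succ b (by rw [hsa]; omega) (by rw [hsa]; omega)]
      have key : ∀ i : Fin m.len,
          (if (a:ℕ) ≤ (i:ℕ) ∧ (i:ℕ) < (b:ℕ) then Ecf g i.castSucc i.succ x else 0)
            = (if i = i₀ then Ecf g i.castSucc i.succ x else 0)
              + (if ((i₀.succ : Fin (m.len+1)):ℕ) ≤ (i:ℕ) ∧ (i:ℕ) < (b:ℕ)
                  then Ecf g i.castSucc i.succ x else 0) := by
        intro i
        by_cases hii : i = i₀
        · subst hii
          rw [if_pos rfl, if_pos (by rw [hva]; constructor <;> omega),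
            if_neg (by rw [hsa, hva]; omega), add_zero]
        · rw [if_neg hii]
          have hvi : (i:ℕ) ≠ (a:ℕ) := fun hv => hii (Fin.ext (hv.trans hva.symm))
          rw [hsa]
          by_cases hc : (a:ℕ) ≤ (i:ℕ) ∧ (i:ℕ) < (b:ℕ)
          · rw [if_pos hc, if_pos (by omega), zero_add]
          · rw [if_neg hc, if_neg (by omega), zero_add]
      rw [Finset.sum_congr rfl fun i _ => key i, Finset.sum_add_distrib,
        Finset.sum_ite_eq' Finset.univ i₀ (fun i => Ecf g i.castSucc i.succ x),
        if_pos (Finset.mem_univ i₀), hca]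

end Dev6
section Dev7
open SimplexCategory
open scoped Classical
variable {R : Type} [CommSemiring R] {X : SSet.{0}}
variable (g : (SSet.truncation 2).obj X ⟶ (SSet.truncation 2).obj (DRobj R SCircle))

lemma castSucc_le_succ' {n : ℕ} (j : Fin n) : j.castSucc ≤ j.succ := by
  rw [Fin.le_def, Fin.coe_castSucc, Fin.val_succ]; omega

lemma sumCollapse {m : SimplexCategory} (j : Fin m.len) (P : Fin m.len → R) :
    (∑ i : Fin m.len,
      if ((j.castSucc : Fin (m.len+1)):ℕ) ≤ (i:ℕ) ∧ (i:ℕ) < ((j.succ : Fin (m.len+1)):ℕ)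
        then P i else 0) = P j := by
  have key : ∀ i : Fin m.len,
      (if ((j.castSucc : Fin (m.len+1)):ℕ) ≤ (i:ℕ) ∧ (i:ℕ) < ((j.succ : Fin (m.len+1)):ℕ)
        then P i else 0) = (if i = j then P i else 0) := by
    intro i
    refine if_congr ?_ rfl rfl
    rw [Fin.coe_castSucc, Fin.val_succ]
    constructor
    · rintro ⟨h1, h2⟩; exact Fin.ext (by omega)
    · rintro rfl; omega
  rw [Finset.sum_congr rfl fun i _ => key i,
    Finset.sum_ite_eq' Finset.univ j P, if_pos (Finset.mem_univ j)]

lemma sumVanish {m : SimplexCategory} (P : Fin m.len → R) :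
    (∑ i : Fin m.len,
      if ((i:ℕ) < ((0 : Fin (m.len+1)):ℕ) ∨ ((Fin.last m.len : Fin (m.len+1)):ℕ) ≤ (i:ℕ))
        then P i else 0) = 0 :=
  Finset.sum_eq_zero fun i _ => if_neg (by
    rw [Fin.val_zero, Fin.val_last]
    have := i.isLt
    omega)

/-- reconstruction for truncated maps -/
lemma g_recon_thq {m : SimplexCategory} (hm : m.len ≤ 2) (y : X.obj (op m)) (j : Fin m.len) :
    Ecf g j.castSucc j.succ y
      = (g.app (op (⟨m, hm⟩ : SimplexCategory.Truncated 2)) y : DistR R _).1 (thq j) :=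
  (Ecf_eval g hm j.castSucc j.succ (castSucc_le_succ' j) y).trans (sumCollapse j _)

lemma g_recon_ptm {m : SimplexCategory} (hm : m.len ≤ 2) (y : X.obj (op m)) :
    Bcf g 0 (Fin.last m.len) y
      = (g.app (op (⟨m, hm⟩ : SimplexCategory.Truncated 2)) y : DistR R _).1 (ptm m) := by
  refine (Bcf_eval g hm 0 (Fin.last m.len) (Fin.zero_le _) y).trans ?_
  rw [sumVanish, add_zero]

/-- reconstruction for untruncated maps -/
lemma f_recon_thq (f : X ⟶ DRobj R SCircle) {k : SimplexCategoryᵒᵖ} (x : X.obj k)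
    (j : Fin k.unop.len) :
    (f.app k x : DistR R (SCircle.obj k)).1 (thq j)
      = Ecf ((SSet.truncation 2).map f) j.castSucc j.succ x := by
  have hnat : (f.app (op (SimplexCategory.mk 1)) (X.map (edg j.castSucc j.succ).op x)
        : DistR R (SCircle.obj (op (SimplexCategory.mk 1))))
      = DistR.map (SCircle.map (edg j.castSucc j.succ).op) (f.app k x) :=
    NatTrans.naturality_apply f (edg j.castSucc j.succ).op x
  symm
  show (f.app (op (SimplexCategory.mk 1)) (X.map (edg j.castSucc j.succ).op x)
      : DistR R (SCircle.obj (op (SimplexCategory.mk 1)))).1 (thq θ1) = _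
  rw [hnat]
  refine (eval_thq (edg j.castSucc j.succ) (f.app k x)).trans ?_
  rw [edg_apply0, edg_apply1 _ _ (castSucc_le_succ' j)]
  exact sumCollapse j _

lemma f_recon_ptm (f : X ⟶ DRobj R SCircle) {k : SimplexCategoryᵒᵖ} (x : X.obj k) :
    (f.app k x : DistR R (SCircle.obj k)).1 (ptm k.unop)
      = Bcf ((SSet.truncation 2).map f) 0 (Fin.last k.unop.len) x := by
  have hnat : (f.app (op (SimplexCategory.mk 1))
        (X.map (edg (0 : Fin (k.unop.len+1)) (Fin.last k.unop.len)).op x)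
        : DistR R (SCircle.obj (op (SimplexCategory.mk 1))))
      = DistR.map (SCircle.map (edg (0 : Fin (k.unop.len+1)) (Fin.last k.unop.len)).op)
          (f.app k x) :=
    NatTrans.naturality_apply f (edg (0 : Fin (k.unop.len+1)) (Fin.last k.unop.len)).op x
  symm
  show (f.app (op (SimplexCategory.mk 1))
      (X.map (edg (0 : Fin (k.unop.len+1)) (Fin.last k.unop.len)).op x)
      : DistR R (SCircle.obj (op (SimplexCategory.mk 1)))).1 (ptm (SimplexCategory.mk 1)) = _
  rw [hnat]
  refine (eval_ptm (edg (0 : Fin (k.unop.len+1)) (Fin.last k.unop.len)) (f.app k x)).trans ?_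
  rw [edg_apply0, edg_apply1 _ _ (Fin.zero_le _), sumVanish, add_zero]

/-- the constructed extension -/
noncomputable def bd (m : SimplexCategory) (x : X.obj (op m)) :
    DistR R (SCircle.obj (op m)) :=
  ⟨Finsupp.single (ptm m) (Bcf g 0 (Fin.last m.len) x)
    + ∑ i : Fin m.len, Finsupp.single (thq i) (Ecf g i.castSucc i.succ x), by
      rw [sum_canon]
      have ht := telescope g x m.len 0 (Fin.last m.len)
        (by rw [Fin.val_zero, Fin.val_last]; omega)
        (by rw [Fin.val_zero, Fin.val_last]; omega)
      have hsimp : ∑ i : Fin m.len,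
          (if ((0 : Fin (m.len+1)):ℕ) ≤ (i:ℕ) ∧ (i:ℕ) < ((Fin.last m.len : Fin (m.len+1)):ℕ)
            then Ecf g i.castSucc i.succ x else 0)
          = ∑ i : Fin m.len, Ecf g i.castSucc i.succ x :=
        Finset.sum_congr rfl fun i _ => if_pos (by
          rw [Fin.val_zero, Fin.val_last]
          have := i.isLt
          omega)
      rw [← hsimp, ← ht, BE_one]⟩

lemma bd_apply_ptm (m : SimplexCategory) (x : X.obj (op m)) :
    (bd g m x).1 (ptm m) = Bcf g 0 (Fin.last m.len) x :=
  canon_apply_ptm _ _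

lemma bd_apply_thq (m : SimplexCategory) (x : X.obj (op m)) (j : Fin m.len) :
    (bd g m x).1 (thq j) = Ecf g j.castSucc j.succ x :=
  canon_apply_thq _ _ j

lemma sumSplitOr {α : Type} [Fintype α] (P Q : α → Prop) (h : ∀ i, ¬(P i ∧ Q i)) (f : α → R) :
    (∑ i, if (P i ∨ Q i) then f i else 0)
      = (∑ i, if P i then f i else 0) + (∑ i, if Q i then f i else 0) := by
  rw [← Finset.sum_add_distrib]
  refine Finset.sum_congr rfl fun i _ => ?_
  by_cases hp : P i
  · rw [if_pos (Or.inl hp), if_pos hp, if_neg (fun hq => h i ⟨hp, hq⟩), add_zero]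
  · by_cases hq : Q i
    · rw [if_pos (Or.inr hq), if_neg hp, if_pos hq, zero_add]
    · rw [if_neg (fun hor => hor.elim hp hq), if_neg hp, if_neg hq, add_zero]

lemma tele {m : SimplexCategory} (a b : Fin (m.len+1)) (hab : (a:ℕ) ≤ (b:ℕ)) (x : X.obj (op m)) :
    Ecf g a b x = ∑ i : Fin m.len,
      (if (a:ℕ) ≤ (i:ℕ) ∧ (i:ℕ) < (b:ℕ) then Ecf g i.castSucc i.succ x else 0) :=
  telescope g x ((b:ℕ) - (a:ℕ)) a b hab rfl

lemma bd_nat {m' m : SimplexCategory} (θ : m' ⟶ m) (x : X.obj (op m)) :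
    bd g m' (X.map θ.op x) = DistR.map (SCircle.map θ.op) (bd g m x) := by
  refine Subtype.ext (Finsupp.ext fun q => ?_)
  show (bd g m' (X.map θ.op x)).1 q = Finsupp.mapDomain (SCircle.map θ.op) (bd g m x).1 q
  rw [mapDomain_canon_apply θ (bd g m x).1 q]
  rcases circle_cases q with hq | ⟨j, hq⟩
  · rw [hq, bd_apply_ptm, if_pos rfl, bd_apply_ptm]
    have hmono0l : ((θ.toOrderHom 0 : Fin (m.len+1)):ℕ)
        ≤ ((θ.toOrderHom (Fin.last m'.len) : Fin (m.len+1)):ℕ) := by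
      have h := θ.toOrderHom.monotone
        (show (0 : Fin (m'.len+1)) ≤ Fin.last m'.len by rw [Fin.le_def, Fin.val_zero]; omega)
      rw [Fin.le_def] at h
      exact h
    have hcong : ∀ i : Fin m.len,
        (if (Quot.mk _ (θ ≫ thrm i) : SCircle.obj (op m')) = ptm m'
          then (bd g m x).1 (thq i) else 0)
        = (if (i:ℕ) < ((θ.toOrderHom 0 : Fin (m.len+1)):ℕ)
            then Ecf g i.castSucc i.succ x else 0)
          + (if ((θ.toOrderHom (Fin.last m'.len) : Fin (m.len+1)):ℕ) ≤ (i:ℕ)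
            then Ecf g i.castSucc i.succ x else 0) := fun i => by
      rw [bd_apply_thq]
      by_cases h1 : (i:ℕ) < ((θ.toOrderHom 0 : Fin (m.len+1)):ℕ)
      · rw [if_pos ((comp_thrm_eq_ptm θ i).mpr (Or.inl h1)), if_pos h1,
          if_neg (by omega), add_zero]
      · by_cases h2 : ((θ.toOrderHom (Fin.last m'.len) : Fin (m.len+1)):ℕ) ≤ (i:ℕ)
        · rw [if_pos ((comp_thrm_eq_ptm θ i).mpr (Or.inr h2)), if_neg h1, if_pos h2, zero_add]
        · rw [if_neg (fun hc => ((comp_thrm_eq_ptm θ i).mp hc).elim h1 h2),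
            if_neg h1, if_neg h2, add_zero]
    rw [Finset.sum_congr rfl fun i _ => hcong i, Finset.sum_add_distrib]
    -- turn the two sums into telescopes
    have h1 : (∑ i : Fin m.len,
        if (i:ℕ) < ((θ.toOrderHom 0 : Fin (m.len+1)):ℕ) then Ecf g i.castSucc i.succ x else 0)
        = Ecf g 0 (θ.toOrderHom 0) x := by
      rw [tele g 0 (θ.toOrderHom 0) (by rw [Fin.val_zero]; omega) x]
      exact Finset.sum_congr rfl fun i _ => if_congr (by rw [Fin.val_zero]; omega) rfl rfl
    have h2 : (∑ i : Fin m.len,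
        if ((θ.toOrderHom (Fin.last m'.len) : Fin (m.len+1)):ℕ) ≤ (i:ℕ)
          then Ecf g i.castSucc i.succ x else 0)
        = Ecf g (θ.toOrderHom (Fin.last m'.len)) (Fin.last m.len) x := by
      rw [tele g (θ.toOrderHom (Fin.last m'.len)) (Fin.last m.len)
        (by rw [Fin.val_last]; have := (θ.toOrderHom (Fin.last m'.len)).isLt; omega) x]
      refine Finset.sum_congr rfl fun i _ => if_congr ?_ rfl rfl
      rw [Fin.val_last]
      have := i.isLt
      omega
    rw [h1, h2]
    -- left side
    have hpull := Bcf_pull g θ 0 (Fin.last m'.len) (Fin.zero_le _) x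
    rw [← hpull, B_formula g (θ.toOrderHom 0) (θ.toOrderHom (Fin.last m'.len))
      (θ.toOrderHom.monotone (Fin.zero_le _)) x]
    ring
  · rw [hq, bd_apply_thq, if_neg (fun h => thq_ne_ptm j h.symm), zero_add]
    have hcong : ∀ i : Fin m.len,
        (if (Quot.mk _ (θ ≫ thrm i) : SCircle.obj (op m')) = thq j
          then (bd g m x).1 (thq i) else 0)
        = (if ((θ.toOrderHom j.castSucc : Fin (m.len+1)):ℕ) ≤ (i:ℕ)
            ∧ (i:ℕ) < ((θ.toOrderHom j.succ : Fin (m.len+1)):ℕ)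
            then Ecf g i.castSucc i.succ x else 0) := fun i => by
      rw [bd_apply_thq]
      exact if_congr (comp_thrm_eq_thq θ i j) rfl rfl
    rw [Finset.sum_congr rfl fun i _ => hcong i]
    have hpull := Ecf_pull g θ j.castSucc j.succ (castSucc_le_succ' j) x
    rw [← hpull, tele g (θ.toOrderHom j.castSucc) (θ.toOrderHom j.succ)
      (by have := θ.toOrderHom.monotone (castSucc_le_succ' j); rw [Fin.le_def] at this; omega) x]

noncomputable def buildF : X ⟶ DRobj R SCircle where
  app k := TypeCat.ofHom fun x => bd g k.unop x
  naturality k k' ϑ := by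
    ext x
    exact bd_nat g ϑ.unop x

lemma tr_buildF : (SSet.truncation 2).map (buildF g) = g := by
  apply NatTrans.ext
  ext t x
  show bd g t.unop.obj x = g.app t x
  refine Subtype.ext (Finsupp.ext fun q => ?_)
  rcases circle_cases q with hq | ⟨j, hq⟩
  · rw [hq]
    exact (bd_apply_ptm g _ x).trans (g_recon_ptm g t.unop.2 x)
  · rw [hq]
    exact (bd_apply_thq g _ x j).trans (g_recon_thq g t.unop.2 x j)

end Dev7
/-- Restriction along the inclusion of the 2-skeleton induces a bijection
`sDist(X, S¹) → sDist(X^{(2)}, S¹)`: equivalently (by the skeleton–truncation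
adjunction), 2-truncation is a bijection from simplicial set maps `X → D_R(S¹)` to maps
of 2-truncated simplicial sets `tr₂ X → tr₂ D_R(S¹)`. -/
theorem stmt9 (R : Type) [CommSemiring R]
    (hzsf : ∀ a b : R, a + b = 0 → a = 0 ∧ b = 0) (X : SSet.{0}) :
    Function.Bijective
      (fun f : X ⟶ DRobj R SCircle => (SSet.truncation 2).map f) := by
  constructor
  · intro f f' h
    have h' : (SSet.truncation 2).map f = (SSet.truncation 2).map f' := h
    apply NatTrans.ext
    ext k x
    refine Subtype.ext (Finsupp.ext fun q => ?_)
    rcases circle_cases (m := k.unop) q with hq | ⟨j, hq⟩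
    · rw [hq]
      have e1 := f_recon_ptm f x
      have e2 := f_recon_ptm f' x
      rw [h'] at e1
      exact e1.trans e2.symm
    · rw [hq]
      have e1 := f_recon_thq f x j
      have e2 := f_recon_thq f' x j
      rw [h'] at e1
      exact e1.trans e2.symm
  · intro g
    exact ⟨buildF g, tr_buildF g⟩
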